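/- arXiv:2401.13580 — 3 statements merged into one kernel-verified Lean document; each statement's English description precedes it below -/
import Mathlib

section
/- Let p ≡ 1 (mod 3) be a prime, λ a cubic residue character modulo p, and x an integer coprime to p. Then |Σ_{b=0}^{p−1} e^{2πi x b³ / p}| ≤ 2√p. -/
open Finset

/-- The additive character `a ↦ e^{2πi a/p}` on `ℤ/pℤ`. -/
noncomputable def eZMod (p : ℕ) (a : ZMod p) : ℂ :=
  Complex.exp (2 * Real.pi * Complex.I * a.val / p)

section Aux

variable {p : ℕ} [Fact p.Prime]

lemma abs_gaussSum_eq {χ : MulChar (ZMod p) ℂ} (hχ : χ ≠ 1) {ψ : AddChar (ZMod p) ℂ}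
    (hψ : ψ.IsPrimitive) (hn : ∀ a, ‖ψ a‖ = 1) :
    ‖gaussSum χ ψ‖ = Real.sqrt p := by
  have hconj : (starRingEnd ℂ) (gaussSum χ ψ) = gaussSum χ⁻¹ ψ⁻¹ := by
    rw [gaussSum, gaussSum, map_sum]
    refine Finset.sum_congr rfl fun a _ => ?_
    rw [map_mul]
    congr 1
    · exact χ.star_apply' a
    · rw [AddChar.inv_apply', ← Complex.inv_eq_conj (hn a)]
  have key : gaussSum χ ψ * (starRingEnd ℂ) (gaussSum χ ψ) = (p : ℂ) := by
    rw [hconj, gaussSum_mul_gaussSum_eq_card hχ hψ, ZMod.card]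
  have h2 : ((Complex.normSq (gaussSum χ ψ) : ℝ) : ℂ) = ((p : ℝ) : ℂ) := by
    rw [← Complex.mul_conj, key]; norm_num
  have h3 : Complex.normSq (gaussSum χ ψ) = (p : ℝ) := by exact_mod_cast h2
  rw [Complex.norm_def, h3]

end Aux

/-- For a prime `p ≡ 1 (mod 3)` and `x` coprime to `p`, the cubic exponential sum
satisfies `|∑_b e(x b³/p)| ≤ 2√p`. -/
theorem cubic_exp_sum_bound (p : ℕ) [Fact p.Prime] (hp : p % 3 = 1)
    (x : ZMod p) (hx : x ≠ 0) :
    ‖∑ b : ZMod p, eZMod p (x * b ^ 3)‖ ≤ 2 * Real.sqrt p := by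
  have hp' : p.Prime := Fact.out
  haveI : NeZero p := ⟨hp'.ne_zero⟩
  -- the additive character
  set ψ : AddChar (ZMod p) ℂ := (ZMod.stdAddChar).mulShift x with hψdef
  have hψ1 : ψ ≠ 1 := ZMod.isPrimitive_stdAddChar p hx
  have hψprim : ψ.IsPrimitive := AddChar.IsPrimitive.of_ne_one hψ1
  have hψnorm : ∀ a : ZMod p, ‖ψ a‖ = 1 := by
    intro a
    rw [hψdef, AddChar.mulShift_apply, ZMod.stdAddChar_apply]
    exact Circle.norm_coe _
  have hsum : (∑ b : ZMod p, eZMod p (x * b ^ 3)) = ∑ b : ZMod p, ψ (b ^ 3) := by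
    refine Finset.sum_congr rfl fun b _ => ?_
    rw [hψdef, AddChar.mulShift_apply, ZMod.stdAddChar_apply, ZMod.toCircle_apply, eZMod]
  -- the cubic character
  have h3 : 3 ∣ Fintype.card (ZMod p) - 1 := by
    rw [ZMod.card]; omega
  obtain ⟨χ, hχord⟩ := MulChar.exists_mulChar_orderOf (ZMod p) h3
    (Complex.isPrimitiveRoot_exp 3 (by norm_num))
  have hχ3 : χ ^ 3 = 1 := by rw [← hχord]; exact pow_orderOf_eq_one χ
  have hχ1 : χ ≠ 1 := by
    intro h
    rw [h, orderOf_one] at hχord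
    norm_num at hχord
  have hχ2 : χ ^ 2 ≠ 1 := by
    intro h
    have := orderOf_dvd_of_pow_eq_one h
    rw [hχord] at this
    norm_num at this
  -- counting functions
  set c : ZMod p → ℕ := fun u => (univ.filter fun b : ZMod p => b ^ 3 = u).card with hc
  set s : ZMod p → ℕ := fun u => if u = 0 then 1 else if χ u = 1 then 3 else 0 with hs
  -- key pointwise character formula
  have hkey : ∀ u : ZMod p, u ≠ 0 → (s u : ℂ) = ∑ j ∈ range 3, (χ ^ j) u := by
    intro u hu
    have huu : IsUnit u := (isUnit_iff_ne_zero.mpr hu)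
    have hz3 : χ u ^ 3 = 1 := by
      rw [← MulChar.pow_apply' χ (by norm_num) u, hχ3, MulChar.one_apply huu]
    have hrw : ∑ j ∈ range 3, (χ ^ j) u = ∑ j ∈ range 3, χ u ^ j := by
      refine Finset.sum_congr rfl fun j hj => ?_
      rcases Nat.eq_zero_or_pos j with hj0 | hj0
      · rw [hj0, pow_zero, pow_zero, MulChar.one_apply huu]
      · exact MulChar.pow_apply' χ hj0.ne' u
    rw [hrw]
    by_cases hz : χ u = 1
    · simp [hs, hu, hz, Finset.sum_range_succ]
    · rw [geom_sum_eq hz, hz3, sub_self, zero_div]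
      simp [hs, hu, hz]
  -- sums are equal
  have hc_sum : ∑ u : ZMod p, c u = p := by
    rw [hc, ← Finset.card_eq_sum_card_fiberwise
      (fun b _ => Finset.mem_univ ((b : ZMod p) ^ 3)), Finset.card_univ, ZMod.card]
  have hMulSum : ∀ j, j ∈ range 3 → (∑ u : ZMod p, (χ ^ j) u) =
      if j = 0 then (p : ℂ) - 1 else 0 := by
    intro j hj
    rcases Nat.eq_zero_or_pos j with hj0 | hj0
    · subst hj0
      rw [if_pos rfl, pow_zero]
      have h1 : ∀ u : ZMod p, (1 : MulChar (ZMod p) ℂ) u =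
          1 - if u = 0 then 1 else 0 := by
        intro u
        by_cases hu : u = 0
        · simp [hu, MulChar.map_zero _]
        · simp [hu, MulChar.one_apply (isUnit_iff_ne_zero.mpr hu)]
      rw [Finset.sum_congr rfl fun u _ => h1 u, Finset.sum_sub_distrib,
        Finset.sum_ite_eq' univ (0 : ZMod p) (fun _ => (1 : ℂ))]
      simp [Finset.card_univ, ZMod.card]
    · rw [if_neg hj0.ne']
      have hne : χ ^ j ≠ 1 := by
        intro h
        have h2 := orderOf_dvd_of_pow_eq_one h
        rw [hχord] at h2
        rw [Finset.mem_range] at hj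
        omega
      exact MulChar.sum_eq_zero_of_ne_one hne
  have hs_sumC : (∑ u : ZMod p, (s u : ℂ)) = (p : ℂ) := by
    rw [← Finset.add_sum_erase univ _ (Finset.mem_univ (0 : ZMod p))]
    have h0 : (s 0 : ℂ) = 1 := by simp [hs]
    have hrest : ∑ u ∈ univ.erase (0 : ZMod p), (s u : ℂ)
        = ∑ j ∈ range 3, ∑ u ∈ univ.erase (0 : ZMod p), (χ ^ j) u := by
      rw [← Finset.sum_comm]
      exact Finset.sum_congr rfl fun u hu => hkey u (Finset.mem_erase.mp hu).1
    have herase : ∀ j, ∑ u ∈ univ.erase (0 : ZMod p), (χ ^ j) u = ∑ u : ZMod p, (χ ^ j) u := by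
      intro j
      exact Finset.sum_erase univ (MulChar.map_zero _)
    rw [h0, hrest, Finset.sum_congr rfl fun j hj => (herase j).trans (hMulSum j hj)]
    rw [Finset.sum_range_succ, Finset.sum_range_succ, Finset.sum_range_one]
    norm_num
  have hs_sum : ∑ u : ZMod p, s u = p := by
    have : ((∑ u : ZMod p, s u : ℕ) : ℂ) = ((p : ℕ) : ℂ) := by
      push_cast
      exact hs_sumC
    exact_mod_cast this
  -- pointwise inequality
  have hcle3 : ∀ u : ZMod p, c u ≤ 3 := by
    intro u
    have hsub : (univ.filter fun b : ZMod p => b ^ 3 = u)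
        ⊆ (Polynomial.X ^ 3 - Polynomial.C u).roots.toFinset := by
      intro b hb
      rw [Finset.mem_filter] at hb
      rw [Multiset.mem_toFinset,
        Polynomial.mem_roots (Polynomial.X_pow_sub_C_ne_zero (by norm_num) u)]
      simp [Polynomial.IsRoot, hb.2]
    calc c u ≤ _ := Finset.card_le_card hsub
      _ ≤ Multiset.card (Polynomial.X ^ 3 - Polynomial.C u).roots :=
          Multiset.toFinset_card_le _
      _ ≤ (Polynomial.X ^ 3 - Polynomial.C u).natDegree :=
          Polynomial.card_roots' (Polynomial.X ^ 3 - Polynomial.C u)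
      _ ≤ 3 := le_of_eq (Polynomial.natDegree_X_pow_sub_C)
  have hle : ∀ u : ZMod p, u ∈ (univ : Finset (ZMod p)) → c u ≤ s u := by
    intro u _
    by_cases hu : u = 0
    · subst hu
      have h0 : c 0 = 1 := by
        rw [hc]
        simp only []
        rw [show (Finset.filter (fun b : ZMod p => b ^ 3 = (0 : ZMod p)) univ) = {0} from by
          ext b; simp [pow_eq_zero_iff (by norm_num : (3:ℕ) ≠ 0)]]
        exact Finset.card_singleton 0
      have h1 : s 0 = 1 := by simp [hs]
      omega
    · rcases Nat.eq_zero_or_pos (c u) with h0 | h0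
      · simp [h0]
      · obtain ⟨b, hb⟩ := Finset.card_pos.mp h0
        rw [Finset.mem_filter] at hb
        have hbne : b ≠ 0 := by
          intro h
          rw [h] at hb
          exact hu (by simpa using hb.2.symm)
        have hχu : χ u = 1 := by
          rw [← hb.2, map_pow, ← MulChar.pow_apply' χ (by norm_num : (3:ℕ) ≠ 0) b, hχ3,
            MulChar.one_apply (isUnit_iff_ne_zero.mpr hbne)]
        have : s u = 3 := by simp [hs, hu, hχu]
        rw [this]
        exact hcle3 u
  have heq : ∀ u : ZMod p, c u = s u := by
    have := (Finset.sum_eq_sum_iff_of_le hle).mp (hc_sum.trans hs_sum.symm)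
    intro u
    exact this u (Finset.mem_univ u)
  -- main computation
  have hgauss0 : gaussSum 1 ψ = -1 := by
    rw [gaussSum]
    have h1 : ∀ u : ZMod p, (1 : MulChar (ZMod p) ℂ) u * ψ u
        = ψ u - if u = 0 then ψ u else 0 := by
      intro u
      by_cases hu : u = 0
      · simp [hu, MulChar.map_zero _]
      · simp [hu, MulChar.one_apply (isUnit_iff_ne_zero.mpr hu)]
    rw [Finset.sum_congr rfl fun u _ => h1 u, Finset.sum_sub_distrib,
      AddChar.sum_eq_zero_of_ne_one hψ1,
      Finset.sum_ite_eq' univ (0 : ZMod p) (fun u => ψ u)]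
    simp
  have main : (∑ b : ZMod p, ψ (b ^ 3)) = gaussSum χ ψ + gaussSum (χ ^ 2) ψ := by
    have h1 : (∑ b : ZMod p, ψ (b ^ 3)) = ∑ u : ZMod p, (c u : ℂ) * ψ u := by
      rw [← Finset.sum_fiberwise univ (fun b : ZMod p => b ^ 3) (fun b => ψ (b ^ 3))]
      refine Finset.sum_congr rfl fun u _ => ?_
      rw [Finset.sum_congr rfl (g := fun _ => ψ u) fun b hb => by
        rw [(Finset.mem_filter.mp hb).2]]
      rw [Finset.sum_const, nsmul_eq_mul]
    have h2 : ∀ u : ZMod p, (c u : ℂ) * ψ u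
        = (if u = 0 then ψ u else 0) + (∑ j ∈ range 3, (χ ^ j) u) * ψ u := by
      intro u
      by_cases hu : u = 0
      · have hc0 : c u = 1 := by rw [heq, hs]; simp [hu]
        have hz : ∑ j ∈ range 3, (χ ^ j) u = 0 := by
          refine Finset.sum_eq_zero fun j _ => ?_
          rw [hu]
          exact MulChar.map_zero _
        rw [hc0, hz, if_pos hu]
        ring
      · rw [heq, hkey u hu, if_neg hu, zero_add]
    rw [h1, Finset.sum_congr rfl fun u _ => h2 u, Finset.sum_add_distrib,
      Finset.sum_ite_eq' univ (0 : ZMod p) (fun u => ψ u)]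
    have h4 : ∑ u : ZMod p, (∑ j ∈ range 3, (χ ^ j) u) * ψ u
        = ∑ j ∈ range 3, gaussSum (χ ^ j) ψ := by
      simp_rw [Finset.sum_mul]
      rw [Finset.sum_comm]
      rfl
    rw [h4, Finset.sum_range_succ, Finset.sum_range_succ, Finset.sum_range_one, pow_zero,
      pow_one, hgauss0, if_pos (Finset.mem_univ (0 : ZMod p)), AddChar.map_zero_eq_one]
    ring
  rw [hsum, main]
  calc ‖gaussSum χ ψ + gaussSum (χ ^ 2) ψ‖
      ≤ ‖gaussSum χ ψ‖ + ‖gaussSum (χ ^ 2) ψ‖ :=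
        norm_add_le _ _
    _ = 2 * Real.sqrt p := by
        rw [abs_gaussSum_eq hχ1 hψprim hψnorm, abs_gaussSum_eq hχ2 hψprim hψnorm]
        ring
end

section
/- Let p ≡ 1 (mod 3) be prime, n an integer coprime to p, χ a nontrivial Dirichlet character modulo p, and a₁, a₂ the nontrivial cube roots of 1 modulo p. Then |S_p(n;χ)|² = p(1 + χ(a₁) + χ(a₂)) + Σ_{a=2, a≠a₁,a₂}^{p−1} χ(a) (g(λ) λ(x̄_a) + g(λ²) λ²(x̄_a)), where S_p(n;χ) = Σ_{a=1}^{p} χ(a) e^{2πi n a³/p}, λ is a cubic residue character modulo p, x_a = n(a³−1), and x̄_a is its inverse modulo p. -/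
open Finset

/-- The classical Gauss sum of a Dirichlet character mod `p`. -/
noncomputable def gaussSumChar (p : ℕ) [NeZero p] (χ : DirichletCharacter ℂ p) : ℂ :=
  ∑ a : ZMod p, χ a * eZMod p a

/-- The Kummer sum `S_p(n;χ) = ∑_a χ(a) e(n a³/p)` weighted by a Dirichlet
character `χ` mod `p`. -/
noncomputable def kummerSum (p : ℕ) [NeZero p] (n : ZMod p)
    (χ : DirichletCharacter ℂ p) : ℂ :=
  ∑ a : ZMod p, χ a * eZMod p (n * a ^ 3)

set_option linter.unusedSectionVars false

section basicE
variable (p : ℕ) [NeZero p]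

noncomputable def zetaP : ℂ := Complex.exp (2 * Real.pi * Complex.I / p)

lemma zetaP_prim : IsPrimitiveRoot (zetaP p) p :=
  Complex.isPrimitiveRoot_exp p (NeZero.ne p)

noncomputable def psiP : AddChar (ZMod p) ℂ := AddChar.zmodChar p (zetaP_prim p).pow_eq_one

lemma eZMod_eq (a : ZMod p) : eZMod p a = psiP p a := by
  rw [psiP, AddChar.zmodChar_apply, zetaP, ← Complex.exp_nat_mul, eZMod]
  ring_nf

lemma eZMod_zero : eZMod p 0 = 1 := by
  rw [eZMod_eq]; exact AddChar.map_zero_eq_one _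

lemma eZMod_add (a b : ZMod p) : eZMod p (a + b) = eZMod p a * eZMod p b := by
  simp only [eZMod_eq]; exact AddChar.map_add_eq_mul _ _ _

lemma eZMod_abs (x : ZMod p) : ‖eZMod p x‖ = 1 := by
  have h : (2 * Real.pi * Complex.I * (x.val : ℂ) / p)
      = ((2 * Real.pi * x.val / p : ℝ) : ℂ) * Complex.I := by
    push_cast; ring
  rw [eZMod, h, Complex.norm_exp_ofReal_mul_I]

lemma conj_eZMod (x : ZMod p) : (starRingEnd ℂ) (eZMod p x) = eZMod p (-x) := by
  have hmul : eZMod p x * eZMod p (-x) = 1 := by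
    rw [← eZMod_add]; simp [eZMod_zero]
  rw [← Complex.inv_eq_conj (eZMod_abs p x)]
  exact inv_eq_of_mul_eq_one_right hmul

end basicE

section sums
variable (p : ℕ) [Fact p.Prime]

lemma psiP_ne_one : psiP p ≠ 1 := by
  have hp1 : 1 < p := (Fact.out : p.Prime).one_lt
  rw [AddChar.zmod_char_ne_one_iff]
  show psiP p 1 ≠ 1
  rw [psiP, AddChar.zmodChar_apply, ZMod.val_one p]
  simpa using (zetaP_prim p).ne_one hp1

lemma psiP_sum : ∑ x : ZMod p, psiP p x = 0 :=
  AddChar.sum_eq_zero_of_ne_one (psiP_ne_one p)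

lemma eZMod_sum : ∑ x : ZMod p, eZMod p x = 0 := by
  simp only [eZMod_eq]; exact psiP_sum p

lemma eZMod_mul_sum {c : ZMod p} (hc : c ≠ 0) : ∑ x : ZMod p, eZMod p (c * x) = 0 := by
  rw [← eZMod_sum p]
  exact Fintype.sum_equiv (Equiv.mulLeft₀ c hc) _ _ (fun x => rfl)

lemma conj_chi (χ : DirichletCharacter ℂ p) (b : ZMod p) :
    (starRingEnd ℂ) (χ b) = χ b⁻¹ := by
  rcases eq_or_ne b 0 with rfl | hb
  · rw [inv_zero, MulChar.map_nonunit χ (by simp), map_zero]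
  · have h1 : χ b * χ b⁻¹ = 1 := by
      rw [← map_mul, mul_inv_cancel₀ hb, map_one]
    have hpow : (χ b) ^ (p - 1) = 1 := by
      rw [← map_pow, ZMod.pow_card_sub_one_eq_one hb, map_one]
    have habs : ‖χ b‖ = 1 := by
      have h2 : ‖χ b ^ (p - 1)‖ = ‖(1:ℂ)‖ := by rw [hpow]
      rw [norm_pow, norm_one] at h2
      have hp1 : p - 1 ≠ 0 := by
        have := (Fact.out : p.Prime).one_lt; omega
      rcases pow_eq_one_iff_cases.mp h2 with h | h | h
      · omega
      · exact h
      · nlinarith [norm_nonneg (χ b)]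
    rw [← Complex.inv_eq_conj habs]
    exact (eq_inv_of_mul_eq_one_left (by rw [mul_comm] at h1; exact h1)).symm

end sums

section cube
variable {F : Type*} [Field F] {a₁ a₂ : F}
  (h₁ : a₁ ^ 3 = 1) (h₂ : a₂ ^ 3 = 1) (h₁' : a₁ ≠ 1) (h₂' : a₂ ≠ 1) (hne : a₁ ≠ a₂)

include h₁ h₂ h₁' h₂' hne in
lemma cube_roots_mem {z : F} (hz : z ^ 3 = 1) : z = 1 ∨ z = a₁ ∨ z = a₂ := by
  have q1 : a₁ ^ 2 + a₁ + 1 = 0 := by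
    have h : (a₁ - 1) * (a₁ ^ 2 + a₁ + 1) = 0 := by linear_combination h₁
    rcases mul_eq_zero.mp h with h | h
    · exact absurd (sub_eq_zero.mp h) h₁'
    · exact h
  have q2 : a₂ ^ 2 + a₂ + 1 = 0 := by
    have h : (a₂ - 1) * (a₂ ^ 2 + a₂ + 1) = 0 := by linear_combination h₂
    rcases mul_eq_zero.mp h with h | h
    · exact absurd (sub_eq_zero.mp h) h₂'
    · exact h
  have hs : a₁ + a₂ = -1 := by
    have h3 : (a₁ - a₂) * (a₁ + a₂ + 1) = 0 := by linear_combination q1 - q2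
    rcases mul_eq_zero.mp h3 with h | h
    · exact absurd (sub_eq_zero.mp h) hne
    · linear_combination h
  have hq : a₁ * a₂ = 1 := by linear_combination a₁ * hs - q1
  have key : (z - 1) * ((z - a₁) * (z - a₂)) = 0 := by
    linear_combination hz + (z - z ^ 2) * hs + (z - 1) * hq
  rcases mul_eq_zero.mp key with h | h
  · exact Or.inl (sub_eq_zero.mp h)
  · rcases mul_eq_zero.mp h with h | h
    · exact Or.inr (Or.inl (sub_eq_zero.mp h))
    · exact Or.inr (Or.inr (sub_eq_zero.mp h))

lemma a₁_ne_zero (h₁ : a₁ ^ 3 = 1) : a₁ ≠ 0 := by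
  intro h; rw [h] at h₁; simp at h₁

include h₁ h₂ h₁' h₂' hne in
lemma fiber_eq [Fintype F] [DecidableEq F] {b₀ : F} (hb₀ : b₀ ≠ 0) :
    (univ.erase (0:F)).filter (fun b => b ^ 3 = b₀ ^ 3) = {b₀, a₁ * b₀, a₂ * b₀} := by
  ext x
  simp only [mem_filter, mem_erase, mem_univ, true_and, and_true, mem_insert, mem_singleton]
  constructor
  · rintro ⟨hx0, hx⟩
    have hz : (x * b₀⁻¹) ^ 3 = 1 := by
      rw [mul_pow, hx, inv_pow, mul_inv_cancel₀ (pow_ne_zero 3 hb₀)]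
    have hxe : x = (x * b₀⁻¹) * b₀ := by field_simp
    rcases cube_roots_mem h₁ h₂ h₁' h₂' hne hz with h | h | h
    · left; rw [hxe, h, one_mul]
    · right; left; rw [hxe, h]
    · right; right; rw [hxe, h]
  · rintro (rfl | rfl | rfl)
    · exact ⟨hb₀, rfl⟩
    · exact ⟨mul_ne_zero (a₁_ne_zero h₁) hb₀, by rw [mul_pow, h₁, one_mul]⟩
    · exact ⟨mul_ne_zero (a₁_ne_zero h₂) hb₀, by rw [mul_pow, h₂, one_mul]⟩

include h₁ h₂ h₁' h₂' hne in
lemma fiber_card [Fintype F] [DecidableEq F] {b₀ : F} (hb₀ : b₀ ≠ 0) :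
    ((univ.erase (0:F)).filter (fun b => b ^ 3 = b₀ ^ 3)).card = 3 := by
  rw [fiber_eq h₁ h₂ h₁' h₂' hne hb₀]
  have d1 : b₀ ≠ a₁ * b₀ := fun h => h₁' (mul_right_cancel₀ hb₀ (by rw [one_mul, ← h]))
  have d2 : b₀ ≠ a₂ * b₀ := fun h => h₂' (mul_right_cancel₀ hb₀ (by rw [one_mul, ← h]))
  have d3 : a₁ * b₀ ≠ a₂ * b₀ := by
    intro h; exact hne (mul_right_cancel₀ hb₀ h)
  rw [Finset.card_insert_of_notMem (by simp [d1, d2]),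
    Finset.card_insert_of_notMem (by simp [d3]), Finset.card_singleton]

end cube

section lam
variable {p : ℕ} [Fact p.Prime] (lam : DirichletCharacter ℂ p) (hord : orderOf lam = 3)

include hord in
lemma lam_pow3 : lam ^ 3 = 1 := by rw [← hord]; exact pow_orderOf_eq_one lam

include hord in
lemma lam_cube_root (y : ZMod p) (hy : y ≠ 0) : lam y ^ 3 = 1 := by
  rw [← MulChar.pow_apply' lam three_ne_zero, lam_pow3 lam hord]
  exact MulChar.one_apply (isUnit_iff_ne_zero.mpr hy)

include hord in
lemma lam_eq_one_of_cube {y b : ZMod p} (hb : b ≠ 0) (hby : b ^ 3 = y) : lam y = 1 := by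
  rw [← hby, map_pow, ← MulChar.pow_apply' lam three_ne_zero, lam_pow3 lam hord]
  exact MulChar.one_apply (isUnit_iff_ne_zero.mpr hb)

include hord in
lemma cube_of_lam_eq_one {y : ZMod p} (hy : y ≠ 0) (h1 : lam y = 1) :
    ∃ b : ZMod p, b ≠ 0 ∧ b ^ 3 = y := by
  have : Fact (Nat.Prime 3) := ⟨by norm_num⟩
  obtain ⟨g, hg⟩ := IsCyclic.exists_generator (α := (ZMod p)ˣ)
  have hlamg3 : lam (g : ZMod p) ^ 3 = 1 := lam_cube_root lam hord _ (Units.ne_zero g)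
  have hlamg_ne : lam (g : ZMod p) ≠ 1 := by
    intro h
    have : lam = 1 := by
      rw [MulChar.eq_one_iff]
      intro a
      obtain ⟨k, hk⟩ := mem_powers_iff_mem_zpowers.mpr (hg a)
      rw [← hk, Units.val_pow_eq_pow_val, map_pow, h, one_pow]
    rw [this, orderOf_one] at hord; norm_num at hord
  have horder : orderOf (lam (g : ZMod p)) = 3 := orderOf_eq_prime hlamg3 hlamg_ne
  obtain ⟨k, hk⟩ := mem_powers_iff_mem_zpowers.mpr (hg (Units.mk0 y hy))
  have hyk : (g : ZMod p) ^ k = y := by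
    have := congrArg (Units.val) hk
    rwa [Units.val_pow_eq_pow_val] at this
  have hdvd : 3 ∣ k := by
    rw [← horder]
    apply orderOf_dvd_of_pow_eq_one
    rw [← map_pow, hyk, h1]
  obtain ⟨m, rfl⟩ := hdvd
  exact ⟨(g : ZMod p) ^ m, pow_ne_zero m (Units.ne_zero g), by rw [← pow_mul, mul_comm, hyk]⟩

variable {a₁ a₂ : ZMod p}
  (h₁ : a₁ ^ 3 = 1) (h₂ : a₂ ^ 3 = 1) (h₁' : a₁ ≠ 1) (h₂' : a₂ ≠ 1) (hne : a₁ ≠ a₂)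

include hord h₁ h₂ h₁' h₂' hne in
lemma weight_card (y : ZMod p) (hy : y ≠ 0) :
    ((((univ.erase (0:ZMod p)).filter (fun b => b ^ 3 = y)).card : ℕ) : ℂ)
      = 1 + lam y + lam y ^ 2 := by
  by_cases hc : ∃ b : ZMod p, b ≠ 0 ∧ b ^ 3 = y
  · obtain ⟨b₀, hb₀, hb⟩ := hc
    subst hb
    rw [fiber_card h₁ h₂ h₁' h₂' hne hb₀, lam_eq_one_of_cube lam hord hb₀ rfl]
    norm_num
  · push_neg at hc
    have hfil : (univ.erase (0:ZMod p)).filter (fun b => b ^ 3 = y) = ∅ := by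
      rw [Finset.filter_eq_empty_iff]
      intro b hb
      exact hc b (Finset.mem_erase.mp hb).1
    have hz3 := lam_cube_root lam hord y hy
    have hz1 : lam y ≠ 1 := by
      intro h
      obtain ⟨b, hb, hb3⟩ := cube_of_lam_eq_one lam hord hy h
      exact hc b hb hb3
    have key : (lam y - 1) * (1 + lam y + lam y ^ 2) = 0 := by linear_combination hz3
    rcases mul_eq_zero.mp key with h | h
    · exact absurd (sub_eq_zero.mp h) hz1
    · rw [hfil, Finset.card_empty, Nat.cast_zero, h]

include hord in
lemma gauss_reindex (χ' : DirichletCharacter ℂ p) {c : ZMod p} (hc : c ≠ 0) :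
    ∑ y : ZMod p, χ' y * eZMod p (c * y) = χ' c⁻¹ * gaussSumChar p χ' := by
  have h : ∑ y : ZMod p, χ' y * eZMod p (c * y)
      = ∑ z : ZMod p, χ' (c⁻¹ * z) * eZMod p z := by
    refine (Fintype.sum_equiv (Equiv.mulLeft₀ c⁻¹ (inv_ne_zero hc)) _ _ fun z => ?_).symm
    simp only [Equiv.mulLeft₀_apply]
    rw [← mul_assoc, mul_inv_cancel₀ hc, one_mul]
  rw [h, gaussSumChar, Finset.mul_sum]
  exact Finset.sum_congr rfl fun z _ => by rw [map_mul, mul_assoc]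

include hord h₁ h₂ h₁' h₂' hne in
lemma cubic_sum {c : ZMod p} (hc : c ≠ 0) :
    ∑ b : ZMod p, eZMod p (c * b ^ 3)
      = gaussSumChar p lam * lam c⁻¹ + gaussSumChar p (lam ^ 2) * (lam c⁻¹) ^ 2 := by
  classical
  have hlam0 : lam (0 : ZMod p) = 0 := MulChar.map_nonunit lam (by simp)
  -- split off b = 0
  have hsplit : ∑ b : ZMod p, eZMod p (c * b ^ 3)
      = eZMod p (c * 0 ^ 3) + ∑ b ∈ univ.erase (0 : ZMod p), eZMod p (c * b ^ 3) :=
    (Finset.add_sum_erase _ _ (mem_univ 0)).symm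
  -- fiberwise over cubes
  have hfib : ∑ b ∈ univ.erase (0 : ZMod p), eZMod p (c * b ^ 3)
      = ∑ y ∈ univ.erase (0 : ZMod p),
          (((univ.erase (0:ZMod p)).filter (fun b => b ^ 3 = y)).card : ℂ) * eZMod p (c * y) := by
    rw [← Finset.sum_fiberwise_of_maps_to' (g := fun b : ZMod p => b ^ 3)
      (t := univ.erase (0 : ZMod p)) (fun b hb => by
        simp only [mem_erase, mem_univ, and_true] at hb ⊢
        exact pow_ne_zero 3 hb) (fun y => eZMod p (c * y))]
    exact Finset.sum_congr rfl fun y _ => by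
      rw [Finset.sum_const, nsmul_eq_mul]
  have hw : ∀ y ∈ univ.erase (0 : ZMod p),
      (((univ.erase (0:ZMod p)).filter (fun b => b ^ 3 = y)).card : ℂ) * eZMod p (c * y)
        = eZMod p (c * y) + lam y * eZMod p (c * y) + lam y ^ 2 * eZMod p (c * y) := by
    intro y hy
    rw [weight_card lam hord h₁ h₂ h₁' h₂' hne y (Finset.mem_erase.mp hy).1]
    ring
  rw [hsplit, hfib, Finset.sum_congr rfl hw]
  rw [Finset.sum_add_distrib, Finset.sum_add_distrib]
  have e0 : eZMod p (c * (0:ZMod p)) = 1 := by rw [mul_zero, eZMod_zero]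
  have hA : ∑ y ∈ univ.erase (0 : ZMod p), eZMod p (c * y) = -1 := by
    rw [Finset.sum_erase_eq_sub (mem_univ 0), eZMod_mul_sum p hc, e0]; ring
  have hB : ∑ y ∈ univ.erase (0 : ZMod p), lam y * eZMod p (c * y)
      = lam c⁻¹ * gaussSumChar p lam := by
    rw [Finset.sum_erase_eq_sub (mem_univ 0), hlam0, zero_mul, sub_zero,
      gauss_reindex lam hord lam hc]
  have hC : ∑ y ∈ univ.erase (0 : ZMod p), lam y ^ 2 * eZMod p (c * y)
      = (lam c⁻¹) ^ 2 * gaussSumChar p (lam ^ 2) := by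
    have : ∀ y : ZMod p, lam y ^ 2 = (lam ^ 2) y := fun y =>
      (MulChar.pow_apply' lam two_ne_zero y).symm
    simp only [this]
    rw [Finset.sum_erase_eq_sub (mem_univ 0), MulChar.map_nonunit (lam ^ 2) (by simp),
      zero_mul, sub_zero, gauss_reindex lam hord (lam ^ 2) hc,
      MulChar.pow_apply' lam two_ne_zero]
  rw [hA, hB, hC, show c * (0:ZMod p) ^ 3 = c * 0 by ring, e0]
  ring

end lam

/-- Lemma 1 (nonprincipal case): for a prime `p ≡ 1 (mod 3)`, `n` coprime to `p`, a
nontrivial Dirichlet character `χ` mod `p` and `a₁, a₂` the nontrivial cube roots of unity,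
`|S_p(n;χ)|² = p(1 + χ(a₁) + χ(a₂)) + ∑_{a ∉ {0,1,a₁,a₂}} χ(a)(g(λ)λ(x̄_a) + g(λ²)λ²(x̄_a))`
where `x_a = n(a³ - 1)`. -/
theorem kummer_sum_sq_abs_eq (p : ℕ) [Fact p.Prime] (hp : p % 3 = 1)
    (n : ZMod p) (hn : n ≠ 0)
    (χ : DirichletCharacter ℂ p) (hχ : χ ≠ 1)
    (lam : DirichletCharacter ℂ p) (hord : orderOf lam = 3)
    (a₁ a₂ : ZMod p) (h₁ : a₁ ^ 3 = 1) (h₂ : a₂ ^ 3 = 1)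
    (h₁' : a₁ ≠ 1) (h₂' : a₂ ≠ 1) (hne : a₁ ≠ a₂) :
    ((‖kummerSum p n χ‖) ^ 2 : ℂ) =
      p * (1 + χ a₁ + χ a₂) +
        ∑ a ∈ (Finset.univ : Finset (ZMod p)) \ {0, 1, a₁, a₂},
          χ a * (gaussSumChar p lam * lam (n * (a ^ 3 - 1))⁻¹ +
            gaussSumChar p (lam ^ 2) * (lam (n * (a ^ 3 - 1))⁻¹) ^ 2) := by
    classical
  have hp2 : 1 < p := (Fact.out : p.Prime).one_lt
  have h1z : (1 : ZMod p) ≠ 0 := one_ne_zero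
  have ha₁z : a₁ ≠ 0 := a₁_ne_zero h₁
  have ha₂z : a₂ ≠ 0 := a₁_ne_zero h₂
  set S := kummerSum p n χ with hS
  -- |S|² = S * conj S
  have habs : ((‖S‖ : ℂ)) ^ 2 = S * (starRingEnd ℂ) S := by
    rw [Complex.mul_conj, ← Complex.sq_norm]
    norm_cast
  -- conjugate of the Kummer sum
  have hconj : (starRingEnd ℂ) S = ∑ b : ZMod p, χ b⁻¹ * eZMod p (-(n * b ^ 3)) := by
    rw [hS, kummerSum, map_sum]
    exact Finset.sum_congr rfl fun b _ => by rw [map_mul, conj_chi p χ b, conj_eZMod]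
  -- the inner reindexed identity, valid for every b
  have key : ∀ b : ZMod p, χ b⁻¹ * eZMod p (-(n * b ^ 3)) * S
      = ∑ t : ZMod p, χ t * eZMod p ((n * (t ^ 3 - 1)) * b ^ 3) := by
    intro b
    rcases eq_or_ne b 0 with rfl | hb
    · rw [inv_zero, MulChar.map_nonunit χ (by simp), zero_mul, zero_mul]
      symm
      calc ∑ t : ZMod p, χ t * eZMod p ((n * (t ^ 3 - 1)) * 0 ^ 3)
          = ∑ t : ZMod p, χ t * 1 := by
            refine Finset.sum_congr rfl fun t _ => ?_
            rw [show (n * (t ^ 3 - 1)) * (0:ZMod p) ^ 3 = 0 by ring, eZMod_zero]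
        _ = 0 := by
            simp only [mul_one]
            exact MulChar.sum_eq_zero_of_ne_one hχ
    · have hrei : S = ∑ t : ZMod p, χ (t * b) * eZMod p (n * (t * b) ^ 3) := by
        rw [hS, kummerSum]
        exact (Fintype.sum_equiv (Equiv.mulRight₀ b hb) _ _ fun t => rfl).symm
      rw [hrei, Finset.mul_sum]
      refine Finset.sum_congr rfl fun t _ => ?_
      have h5 : χ b⁻¹ * χ (t * b) = χ t := by
        rw [← map_mul, mul_comm t b, ← mul_assoc, inv_mul_cancel₀ hb, one_mul]
      have h6 : eZMod p (-(n * b ^ 3)) * eZMod p (n * (t * b) ^ 3)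
          = eZMod p ((n * (t ^ 3 - 1)) * b ^ 3) := by
        rw [← eZMod_add]; congr 1; ring
      calc χ b⁻¹ * eZMod p (-(n * b ^ 3)) * (χ (t * b) * eZMod p (n * (t * b) ^ 3))
          = (χ b⁻¹ * χ (t * b)) * (eZMod p (-(n * b ^ 3)) * eZMod p (n * (t * b) ^ 3)) := by
            ring
        _ = χ t * eZMod p ((n * (t ^ 3 - 1)) * b ^ 3) := by rw [h5, h6]
  -- the double sum
  have hdouble : S * (starRingEnd ℂ) S
      = ∑ t : ZMod p, χ t * ∑ b : ZMod p, eZMod p ((n * (t ^ 3 - 1)) * b ^ 3) := by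
    calc S * (starRingEnd ℂ) S
        = ∑ b : ZMod p, χ b⁻¹ * eZMod p (-(n * b ^ 3)) * S := by
          rw [hconj, Finset.mul_sum]
          exact Finset.sum_congr rfl fun b _ => mul_comm _ _
      _ = ∑ b : ZMod p, ∑ t : ZMod p, χ t * eZMod p ((n * (t ^ 3 - 1)) * b ^ 3) :=
          Finset.sum_congr rfl fun b _ => key b
      _ = ∑ t : ZMod p, ∑ b : ZMod p, χ t * eZMod p ((n * (t ^ 3 - 1)) * b ^ 3) :=
          Finset.sum_comm
      _ = ∑ t : ZMod p, χ t * ∑ b : ZMod p, eZMod p ((n * (t ^ 3 - 1)) * b ^ 3) :=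
          Finset.sum_congr rfl fun t _ => (Finset.mul_sum _ _ _).symm
  -- inner sum for cube roots of unity
  have hinner1 : ∀ t : ZMod p, t ^ 3 = 1 →
      (∑ b : ZMod p, eZMod p ((n * (t ^ 3 - 1)) * b ^ 3)) = (p : ℂ) := by
    intro t ht
    have hz : ∀ b : ZMod p, (n * (t ^ 3 - 1)) * b ^ 3 = 0 := fun b => by rw [ht]; ring
    calc ∑ b : ZMod p, eZMod p ((n * (t ^ 3 - 1)) * b ^ 3)
        = ∑ _b : ZMod p, (1 : ℂ) := Finset.sum_congr rfl fun b _ => by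
            rw [hz b, eZMod_zero]
      _ = (p : ℂ) := by
          rw [Finset.sum_const, Finset.card_univ, ZMod.card, nsmul_eq_mul, mul_one]
  -- split the sum over t
  set Q : Finset (ZMod p) := {0, 1, a₁, a₂} with hQdef
  set F : ZMod p → ℂ := fun t => χ t * ∑ b : ZMod p, eZMod p ((n * (t ^ 3 - 1)) * b ^ 3)
    with hF
  have hsplit : ∑ t : ZMod p, F t = ∑ t ∈ Q, F t + ∑ t ∈ univ \ Q, F t := by
    rw [add_comm, Finset.sum_sdiff (Finset.subset_univ Q)]
  have m0 : (0 : ZMod p) ∉ ({1, a₁, a₂} : Finset (ZMod p)) := by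
    simp only [mem_insert, mem_singleton]
    push_neg
    exact ⟨fun h => h1z h.symm, fun h => ha₁z h.symm, fun h => ha₂z h.symm⟩
  have m1 : (1 : ZMod p) ∉ ({a₁, a₂} : Finset (ZMod p)) := by
    simp only [mem_insert, mem_singleton]
    push_neg
    exact ⟨fun h => h₁' h.symm, fun h => h₂' h.symm⟩
  have m2 : a₁ ∉ ({a₂} : Finset (ZMod p)) := by simpa using hne
  have hQsum : ∑ t ∈ Q, F t = p * (1 + χ a₁ + χ a₂) := by
    rw [hQdef, Finset.sum_insert m0, Finset.sum_insert m1, Finset.sum_insert m2,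
      Finset.sum_singleton, hF]
    simp only
    rw [MulChar.map_nonunit χ (by simp), zero_mul, hinner1 1 (by rw [one_pow]),
      hinner1 a₁ h₁, hinner1 a₂ h₂, map_one]
    ring
  have hRsum : ∑ t ∈ univ \ Q, F t
      = ∑ a ∈ (Finset.univ : Finset (ZMod p)) \ {0, 1, a₁, a₂},
          χ a * (gaussSumChar p lam * lam (n * (a ^ 3 - 1))⁻¹ +
            gaussSumChar p (lam ^ 2) * (lam (n * (a ^ 3 - 1))⁻¹) ^ 2) := by
    refine Finset.sum_congr rfl fun a ha => ?_
    rw [Finset.mem_sdiff] at ha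
    obtain ⟨-, hmem⟩ := ha
    simp only [mem_insert, mem_singleton] at hmem
    push_neg at hmem
    obtain ⟨ha0, ha1, haa₁, haa₂⟩ := hmem
    have ht3 : a ^ 3 ≠ 1 := by
      intro h
      rcases cube_roots_mem h₁ h₂ h₁' h₂' hne h with h | h | h
      · exact ha1 h
      · exact haa₁ h
      · exact haa₂ h
    have hc : n * (a ^ 3 - 1) ≠ 0 := mul_ne_zero hn (sub_ne_zero.mpr ht3)
    rw [hF]
    simp only
    rw [cubic_sum lam hord h₁ h₂ h₁' h₂' hne hc]
  rw [habs, hdouble]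
  have huniv : univ.sum F = ∑ t : ZMod p, F t := rfl
  rw [huniv, hsplit, hQsum, hRsum]
end

section
/- Let p ≡ 1 (mod 3) be prime and n an integer coprime to p. Then the second moment Σ_{χ mod p} |S_p(n;χ)|² over all Dirichlet characters χ modulo p satisfies Σ_{χ mod p} |S_p(n;χ)|² = p² + O(p^{3/2}); more precisely, |Σ_{χ mod p} |S_p(n;χ)|² − p²| ≤ C·p^{3/2} for an absolute constant C. -/
open Finset

lemma abs_eZMod {p : ℕ} [NeZero p] (a : ZMod p) : ‖eZMod p a‖ = 1 := by
  have h : (2 * Real.pi * Complex.I * a.val / p : ℂ)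
      = ((2 * Real.pi * a.val / p : ℝ) : ℂ) * Complex.I := by
    push_cast
    ring
  rw [eZMod, h, Complex.norm_exp_ofReal_mul_I]

lemma mul_conj_eZMod {p : ℕ} [NeZero p] (a : ZMod p) :
    eZMod p a * (starRingEnd ℂ) (eZMod p a) = 1 := by
  rw [Complex.mul_conj, Complex.normSq_eq_norm_sq, abs_eZMod]
  norm_num

lemma conj_char_eq {p : ℕ} [NeZero p] (χ : DirichletCharacter ℂ p) {b : ZMod p}
    (hb : IsUnit b) : (starRingEnd ℂ) (χ b) = χ b⁻¹ := by
  have h1 : χ b * χ b⁻¹ = 1 := by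
    rw [← map_mul, ZMod.mul_inv_of_unit b hb, map_one]
  have habs : ‖χ b‖ = 1 := by
    rw [← hb.unit_spec]
    exact χ.unit_norm_eq_one hb.unit
  rw [← Complex.inv_eq_conj habs, inv_eq_of_mul_eq_one_right h1]

lemma orth_char {p : ℕ} [Fact p.Prime] (a b : ZMod p) :
    ∑ χ : DirichletCharacter ℂ p, χ a * (starRingEnd ℂ) (χ b) =
      if a = b ∧ IsUnit b then (p.totient : ℂ) else 0 := by
  by_cases hb : IsUnit b
  · have hrw : ∀ χ : DirichletCharacter ℂ p,
        χ a * (starRingEnd ℂ) (χ b) = χ b⁻¹ * χ a := fun χ => by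
      rw [conj_char_eq χ hb, mul_comm]
    rw [Finset.sum_congr rfl fun χ _ => hrw χ,
      DirichletCharacter.sum_char_inv_mul_char_eq ℂ hb a]
    by_cases hab : a = b
    · rw [if_pos hab.symm, if_pos ⟨hab, hb⟩]
    · rw [if_neg (fun h => hab h.symm), if_neg (fun h => hab h.1)]
  · have h0 : ∀ χ : DirichletCharacter ℂ p,
        χ a * (starRingEnd ℂ) (χ b) = 0 := fun χ => by
      rw [χ.map_nonunit hb, map_zero, mul_zero]
    rw [Finset.sum_congr rfl fun χ _ => h0 χ, Finset.sum_const_zero,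
      if_neg (fun h => hb h.2)]

/-- Theorem 1: for primes `p ≡ 1 (mod 3)` and `n` coprime to `p`,
`∑_{χ mod p} |S_p(n;χ)|² = p² + O(p^{3/2})`. -/
theorem second_moment_kummer :
    ∃ C : ℝ, 0 < C ∧ ∀ (p : ℕ) (_ : p.Prime) (_ : p % 3 = 1) (n : ℤ) (_ : Int.gcd n p = 1),
      haveI : Fact p.Prime := ⟨‹p.Prime›⟩
      |(∑ χ : DirichletCharacter ℂ p, ‖kummerSum p (n : ZMod p) χ‖ ^ 2) -
        (p : ℝ) ^ 2| ≤ C * (p : ℝ) ^ ((3 : ℝ) / 2) := by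
  refine ⟨2, two_pos, fun p hp h3 n hn => ?_⟩
  haveI : Fact p.Prime := ⟨hp⟩
  set N : ZMod p := (n : ZMod p) with hN
  -- key complex identity
  have hC : ∑ χ : DirichletCharacter ℂ p,
      kummerSum p N χ * (starRingEnd ℂ) (kummerSum p N χ) = ((p - 1 : ℕ) : ℂ) ^ 2 := by
    have expand : ∀ χ : DirichletCharacter ℂ p,
        kummerSum p N χ * (starRingEnd ℂ) (kummerSum p N χ) =
        ∑ a : ZMod p, ∑ b : ZMod p,
          (χ a * (starRingEnd ℂ) (χ b)) *
            (eZMod p (N * a ^ 3) * (starRingEnd ℂ) (eZMod p (N * b ^ 3))) := by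
      intro χ
      rw [kummerSum, map_sum, Finset.sum_mul_sum]
      refine Finset.sum_congr rfl fun a _ => Finset.sum_congr rfl fun b _ => ?_
      rw [map_mul]
      ring
    rw [Finset.sum_congr rfl fun χ _ => expand χ]
    rw [Finset.sum_comm]
    have swap2 : ∀ a : ZMod p,
        (∑ χ : DirichletCharacter ℂ p, ∑ b : ZMod p,
          (χ a * (starRingEnd ℂ) (χ b)) *
            (eZMod p (N * a ^ 3) * (starRingEnd ℂ) (eZMod p (N * b ^ 3)))) =
        ∑ b : ZMod p, (if a = b ∧ IsUnit b then (p.totient : ℂ) else 0) *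
            (eZMod p (N * a ^ 3) * (starRingEnd ℂ) (eZMod p (N * b ^ 3))) := by
      intro a
      rw [Finset.sum_comm]
      refine Finset.sum_congr rfl fun b _ => ?_
      rw [← Finset.sum_mul, orth_char a b]
    rw [Finset.sum_congr rfl fun a _ => swap2 a]
    have collapse : ∀ a : ZMod p,
        (∑ b : ZMod p, (if a = b ∧ IsUnit b then (p.totient : ℂ) else 0) *
            (eZMod p (N * a ^ 3) * (starRingEnd ℂ) (eZMod p (N * b ^ 3)))) =
        if IsUnit a then (p.totient : ℂ) else 0 := by
      intro a
      rw [Finset.sum_eq_single a]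
      · by_cases ha : IsUnit a
        · rw [if_pos ⟨rfl, ha⟩, if_pos ha, mul_conj_eZMod, mul_one]
        · rw [if_neg (fun h => ha h.2), if_neg ha, zero_mul]
      · intro b _ hba
        rw [if_neg (fun h => hba h.1.symm), zero_mul]
      · intro h
        exact absurd (Finset.mem_univ a) h
    rw [Finset.sum_congr rfl fun a _ => collapse a]
    have hcard : (Finset.univ.filter (fun a : ZMod p => IsUnit a)).card = p - 1 := by
      simp only [isUnit_iff_ne_zero]
      rw [Finset.filter_ne', Finset.card_erase_of_mem (Finset.mem_univ 0),
        Finset.card_univ, ZMod.card]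
    rw [Finset.sum_ite, Finset.sum_const, Finset.sum_const_zero, add_zero, hcard,
      Nat.totient_prime hp, nsmul_eq_mul, sq]
  -- real identity
  have hR : (∑ χ : DirichletCharacter ℂ p, ‖kummerSum p N χ‖ ^ 2)
      = ((p - 1 : ℕ) : ℝ) ^ 2 := by
    apply Complex.ofReal_injective
    push_cast
    rw [← hC]
    refine Finset.sum_congr rfl fun χ _ => ?_
    rw [Complex.mul_conj, Complex.normSq_eq_norm_sq]
    push_cast
    ring
  rw [hR]
  have hp1 : (1 : ℝ) ≤ (p : ℝ) := by exact_mod_cast hp.one_lt.le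
  have hcast : ((p - 1 : ℕ) : ℝ) = (p : ℝ) - 1 := by
    rw [Nat.cast_sub hp.one_lt.le, Nat.cast_one]
  rw [hcast]
  have h32 : (p : ℝ) ≤ (p : ℝ) ^ ((3 : ℝ) / 2) := by
    calc (p : ℝ) = (p : ℝ) ^ (1 : ℝ) := (Real.rpow_one _).symm
    _ ≤ (p : ℝ) ^ ((3 : ℝ) / 2) :=
        Real.rpow_le_rpow_of_exponent_le hp1 (by norm_num)
  have habs2 : |((p : ℝ) - 1) ^ 2 - (p : ℝ) ^ 2| = 2 * (p : ℝ) - 1 := by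
    have h1 : ((p : ℝ) - 1) ^ 2 - (p : ℝ) ^ 2 = 1 - 2 * (p : ℝ) := by ring
    rw [h1, abs_of_nonpos (by linarith)]
    ring
  rw [habs2]
  linarith
end
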